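/- Let κ > 0 and A, B ∈ ℝ. Then lim_{ε → 0⁺} (κ/(2π)) ∫_ℝ ∫_ℝ exp(−ε(a² + b²)) · exp( i·(κ/2)·(a² − b²) − (i/√2)·A·(a + b) − (i/√2)·B·(a − b) ) da db = exp(−i·A·B/κ). -/

import Mathlib

open MeasureTheory Filter

open Complex in
lemma cpow_half_mul_aux {r : ℝ} (hr : 0 < r) :
    ((r : ℂ) * Complex.I) ^ (1/2 : ℂ) * ((r : ℂ) * (-Complex.I)) ^ (1/2 : ℂ) = (r : ℂ) := by
  have hz : (r:ℂ) * Complex.I ≠ 0 := mul_ne_zero (ofReal_ne_zero.mpr hr.ne') I_ne_zero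
  have hw : (r:ℂ) * (-Complex.I) ≠ 0 :=
    mul_ne_zero (ofReal_ne_zero.mpr hr.ne') (neg_ne_zero.mpr I_ne_zero)
  have habs : ‖(r:ℂ) * Complex.I‖ = r := by simp [abs_of_pos hr]
  have habs' : ‖(r:ℂ) * (-Complex.I)‖ = r := by simp [abs_of_pos hr]
  have harg : Complex.arg ((r:ℂ) * Complex.I) = Real.pi / 2 := by
    rw [Complex.arg_eq_pi_div_two_iff]
    constructor <;> simp [hr]
  have harg' : Complex.arg ((r:ℂ) * (-Complex.I)) = -(Real.pi / 2) := by
    rw [Complex.arg_eq_neg_pi_div_two_iff]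
    constructor <;> simp [hr]
  rw [Complex.cpow_def_of_ne_zero hz, Complex.cpow_def_of_ne_zero hw, ← Complex.exp_add,
    Complex.log, Complex.log, habs, habs', harg, harg']
  have : (↑(Real.log r) + ↑(Real.pi / 2) * I) * (1/2) + (↑(Real.log r) + ↑(-(Real.pi/2)) * I) * (1/2)
      = ((Real.log r : ℝ) : ℂ) := by push_cast; ring
  rw [this, ← Complex.ofReal_exp, Real.exp_log hr]

/-- Let `κ > 0` and `A, B ∈ ℝ`.  Then the Gaussian-regularized
Fresnel-type double integral
`(κ/(2π)) ∬ exp(-ε(a²+b²)) exp(i(κ/2)(a²-b²) - (i/√2)A(a+b) - (i/√2)B(a-b)) da db`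
tends to `exp(-i A B/κ)` as `ε → 0⁺`. -/
theorem stmt10 (κ A B : ℝ) (hκ : 0 < κ) :
    Tendsto
      (fun ε : ℝ =>
        ((κ / (2 * Real.pi) : ℝ) : ℂ) *
          ∫ a : ℝ, ∫ b : ℝ,
            Complex.exp (-((ε : ℂ) * ((a : ℂ) ^ 2 + (b : ℂ) ^ 2))) *
              Complex.exp
                (Complex.I * ((κ : ℂ) / 2) * ((a : ℂ) ^ 2 - (b : ℂ) ^ 2) -
                  Complex.I / (Real.sqrt 2 : ℂ) * (A : ℂ) * ((a : ℂ) + (b : ℂ)) -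
                  Complex.I / (Real.sqrt 2 : ℂ) * (B : ℂ) * ((a : ℂ) - (b : ℂ))))
      (nhdsWithin 0 (Set.Ioi 0))
      (nhds (Complex.exp (-Complex.I * (A : ℂ) * (B : ℂ) / (κ : ℂ)))) := by
  have hκ0 : (κ : ℂ) ≠ 0 := Complex.ofReal_ne_zero.mpr hκ.ne'
  have hI : Complex.I ≠ 0 := Complex.I_ne_zero
  have hIk : Complex.I * ((κ:ℂ)/2) ≠ 0 := by
    apply mul_ne_zero hI
    simp [hκ0]
  have hsqrt2 : ((Real.sqrt 2 : ℝ) : ℂ) ≠ 0 := by simp [Real.sqrt_eq_zero']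
  have hsq2 : ((Real.sqrt 2 : ℝ) : ℂ)^2 = 2 := by
    rw [← Complex.ofReal_pow, Real.sq_sqrt (by norm_num : (0:ℝ) ≤ 2)]
    norm_num
  set c1 : ℂ := -(Complex.I / (Real.sqrt 2 : ℂ)) * ((A:ℂ) + (B:ℂ)) with hc1
  set c2 : ℂ := -(Complex.I / (Real.sqrt 2 : ℂ)) * ((A:ℂ) - (B:ℂ)) with hc2
  set D1 : ℝ → ℂ := fun ε => -(ε:ℂ) + Complex.I * ((κ:ℂ)/2) with hD1
  set D2 : ℝ → ℂ := fun ε => -(ε:ℂ) - Complex.I * ((κ:ℂ)/2) with hD2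
  have hD10 : D1 0 = Complex.I * ((κ:ℂ)/2) := by simp [hD1]
  have hD20 : D2 0 = -(Complex.I * ((κ:ℂ)/2)) := by simp [hD2]
  set G : ℝ → ℂ := fun ε =>
    ((κ / (2 * Real.pi) : ℝ) : ℂ) *
      (((Real.pi:ℂ) / -(D1 ε)) ^ (1/2 : ℂ) * Complex.exp (0 - c1^2 / (4 * D1 ε)) *
       (((Real.pi:ℂ) / -(D2 ε)) ^ (1/2 : ℂ) * Complex.exp (0 - c2^2 / (4 * D2 ε)))) with hG
  -- Step 1: on (0, ∞) the function agrees with `G`.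
  have heq : ∀ ε ∈ Set.Ioi (0:ℝ), G ε =
      ((κ / (2 * Real.pi) : ℝ) : ℂ) *
          ∫ a : ℝ, ∫ b : ℝ,
            Complex.exp (-((ε : ℂ) * ((a : ℂ) ^ 2 + (b : ℂ) ^ 2))) *
              Complex.exp
                (Complex.I * ((κ : ℂ) / 2) * ((a : ℂ) ^ 2 - (b : ℂ) ^ 2) -
                  Complex.I / (Real.sqrt 2 : ℂ) * (A : ℂ) * ((a : ℂ) + (b : ℂ)) -
                  Complex.I / (Real.sqrt 2 : ℂ) * (B : ℂ) * ((a : ℂ) - (b : ℂ))) := by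
    intro ε hε
    rw [Set.mem_Ioi] at hε
    have hb1 : (D1 ε).re < 0 := by simp [hD1, hε]
    have hb2 : (D2 ε).re < 0 := by simp [hD2, hε]
    have hfun : ∀ a b : ℝ,
        Complex.exp (-((ε : ℂ) * ((a : ℂ) ^ 2 + (b : ℂ) ^ 2))) *
              Complex.exp
                (Complex.I * ((κ : ℂ) / 2) * ((a : ℂ) ^ 2 - (b : ℂ) ^ 2) -
                  Complex.I / (Real.sqrt 2 : ℂ) * (A : ℂ) * ((a : ℂ) + (b : ℂ)) -
                  Complex.I / (Real.sqrt 2 : ℂ) * (B : ℂ) * ((a : ℂ) - (b : ℂ)))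
        = Complex.exp (D1 ε * (a:ℂ)^2 + c1 * (a:ℂ) + 0) *
          Complex.exp (D2 ε * (b:ℂ)^2 + c2 * (b:ℂ) + 0) := by
      intro a b
      rw [← Complex.exp_add, ← Complex.exp_add]
      congr 1
      simp only [hc1, hc2, hD1, hD2]
      ring
    rw [hG]
    simp_rw [hfun, integral_const_mul, integral_mul_const,
      integral_cexp_quadratic hb1 c1 0, integral_cexp_quadratic hb2 c2 0]
  -- Step 2: base values at ε = 0.
  have hr : 0 < 2 * Real.pi / κ := by positivity
  have hval1 : (Real.pi:ℂ) / -(D1 0) = ((2*Real.pi/κ : ℝ) : ℂ) * Complex.I := by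
    rw [hD10, div_eq_iff (neg_ne_zero.mpr hIk)]
    push_cast
    field_simp
    ring_nf
    rw [Complex.I_sq]
    ring
  have hval2 : (Real.pi:ℂ) / -(D2 0) = ((2*Real.pi/κ : ℝ) : ℂ) * (-Complex.I) := by
    rw [hD20, neg_neg, div_eq_iff hIk]
    push_cast
    field_simp
    ring_nf
    rw [Complex.I_sq]
    ring
  -- Step 3: G is continuous at 0.
  have hcontD1 : Continuous D1 := by
    rw [hD1]; exact (Complex.continuous_ofReal.neg).add continuous_const
  have hcontD2 : Continuous D2 := by
    rw [hD2]; exact (Complex.continuous_ofReal.neg).sub continuous_const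
  have hmem1 : (Real.pi:ℂ) / -(D1 0) ∈ Complex.slitPlane := by
    rw [hval1, Complex.mem_slitPlane_iff]
    right
    simp [hr.ne']
  have hmem2 : (Real.pi:ℂ) / -(D2 0) ∈ Complex.slitPlane := by
    rw [hval2, Complex.mem_slitPlane_iff]
    right
    simp [hr.ne']
  have hcontG : ContinuousAt G 0 := by
    rw [hG]
    have hne1 : -(D1 0) ≠ 0 := by rw [hD10]; simpa using hIk
    have hne2 : -(D2 0) ≠ 0 := by rw [hD20]; simpa using hIk
    have hd1 : ContinuousAt (fun ε : ℝ => (Real.pi:ℂ) / -(D1 ε)) 0 :=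
      ContinuousAt.div continuousAt_const (hcontD1.neg.continuousAt) hne1
    have hd2 : ContinuousAt (fun ε : ℝ => (Real.pi:ℂ) / -(D2 ε)) 0 :=
      ContinuousAt.div continuousAt_const (hcontD2.neg.continuousAt) hne2
    have h1 : ContinuousAt (fun ε : ℝ => ((Real.pi:ℂ) / -(D1 ε)) ^ (1/2:ℂ)) 0 :=
      hd1.cpow continuousAt_const hmem1
    have h2 : ContinuousAt (fun ε : ℝ => ((Real.pi:ℂ) / -(D2 ε)) ^ (1/2:ℂ)) 0 :=
      hd2.cpow continuousAt_const hmem2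
    have h3 : ContinuousAt (fun ε : ℝ => Complex.exp (0 - c1^2 / (4 * D1 ε))) 0 :=
      Complex.continuous_exp.continuousAt.comp
        (ContinuousAt.sub continuousAt_const
          (ContinuousAt.div continuousAt_const ((continuous_const.mul hcontD1).continuousAt)
            (by rw [hD10]; exact mul_ne_zero (by norm_num) hIk)))
    have h4 : ContinuousAt (fun ε : ℝ => Complex.exp (0 - c2^2 / (4 * D2 ε))) 0 :=
      Complex.continuous_exp.continuousAt.comp
        (ContinuousAt.sub continuousAt_const
          (ContinuousAt.div continuousAt_const ((continuous_const.mul hcontD2).continuousAt)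
            (by rw [hD20]; exact mul_ne_zero (by norm_num) (neg_ne_zero.mpr hIk))))
    exact continuousAt_const.mul ((h1.mul h3).mul (h2.mul h4))
  -- Step 4: value of G at 0.
  have hexp : (0 - c1^2 / (4 * (Complex.I * ((κ:ℂ)/2))))
      + (0 - c2^2 / (4 * (-(Complex.I * ((κ:ℂ)/2)))))
      = -Complex.I * (A:ℂ) * (B:ℂ) / (κ:ℂ) := by
    have h4 : ((Real.sqrt 2 : ℝ):ℂ)⁻¹ ^ 4 = (4:ℂ)⁻¹ := by
      rw [show ((Real.sqrt 2 : ℝ):ℂ)⁻¹ ^ 4 = ((((Real.sqrt 2 : ℝ):ℂ))^2)⁻¹^2 by ring, hsq2]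
      norm_num
    have h5 : Complex.I ^ 5 = Complex.I := by
      simp [pow_succ, Complex.I_mul_I]
    rw [hc1, hc2]
    field_simp
    ring_nf
    rw [hsq2]
    ring
  have hCr : ((κ / (2 * Real.pi) : ℝ) : ℂ) * ((2*Real.pi/κ : ℝ) : ℂ) = 1 := by
    rw [← Complex.ofReal_mul,
      show (κ / (2*Real.pi)) * (2*Real.pi/κ) = 1 by
        field_simp]
    norm_num
  have hG0 : G 0 = Complex.exp (-Complex.I * (A : ℂ) * (B : ℂ) / (κ : ℂ)) := by
    rw [hG]
    simp only
    rw [hval1, hval2, hD10, hD20]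
    calc ((κ / (2 * Real.pi) : ℝ) : ℂ) *
        ((((2*Real.pi/κ : ℝ):ℂ) * Complex.I) ^ (1/2:ℂ) *
            Complex.exp (0 - c1^2/(4*(Complex.I*((κ:ℂ)/2)))) *
        ((((2*Real.pi/κ : ℝ):ℂ) * (-Complex.I)) ^ (1/2:ℂ) *
            Complex.exp (0 - c2^2/(4*(-(Complex.I*((κ:ℂ)/2)))))))
        = ((κ / (2 * Real.pi) : ℝ) : ℂ) *
          (((((2*Real.pi/κ : ℝ):ℂ) * Complex.I) ^ (1/2:ℂ) *
            (((2*Real.pi/κ : ℝ):ℂ) * (-Complex.I)) ^ (1/2:ℂ)) *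
          (Complex.exp (0 - c1^2/(4*(Complex.I*((κ:ℂ)/2)))) *
            Complex.exp (0 - c2^2/(4*(-(Complex.I*((κ:ℂ)/2))))))) := by ring
      _ = (((κ / (2 * Real.pi) : ℝ) : ℂ) * ((2*Real.pi/κ : ℝ):ℂ)) *
          (Complex.exp (0 - c1^2/(4*(Complex.I*((κ:ℂ)/2)))) *
            Complex.exp (0 - c2^2/(4*(-(Complex.I*((κ:ℂ)/2)))))) := by
        rw [cpow_half_mul_aux hr]; ring
      _ = Complex.exp (-Complex.I * (A : ℂ) * (B : ℂ) / (κ : ℂ)) := by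
        rw [hCr, ← Complex.exp_add, hexp, one_mul]
  have hTG : Tendsto G (nhdsWithin 0 (Set.Ioi 0))
      (nhds (Complex.exp (-Complex.I * (A : ℂ) * (B : ℂ) / (κ : ℂ)))) := by
    rw [← hG0]
    exact hcontG.tendsto.mono_left nhdsWithin_le_nhds
  exact hTG.congr' (Filter.eventuallyEq_of_mem self_mem_nhdsWithin heq)
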